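/- Let Z: ℝ^N → ℝ be nonnegative with integer translates summing to 1, and suppose f: ℝ^N → ℝ is uniformly continuous and bounded. If moreover for every δ > 0, ∑_{k : ‖y − k‖ > δ n} Z(y − k) → 0 uniformly in y as n → ∞, then A_n(f, x) → f(x) uniformly in x as n → ∞, where A_n(f, x) = ∑_{k ∈ ℤ^N} f(k/n) Z(nx − k). -/

import Mathlib

theorem An_uniform_convergence (N : ℕ) (Z : (Fin N → ℝ) → ℝ)
    (hZ : ∀ y : Fin N → ℝ, 0 ≤ Z y)
    (hsum : ∀ y : Fin N → ℝ,
      HasSum (fun k : Fin N → ℤ => Z (y - fun i => (k i : ℝ))) 1)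
    (f : (Fin N → ℝ) → ℝ) (hfc : UniformContinuous f)
    (B : ℝ) (hfb : ∀ y, |f y| ≤ B)
    (htail : ∀ δ > (0 : ℝ), ∀ ε > (0 : ℝ), ∃ n₀ : ℕ, ∀ n ≥ n₀, ∀ y : Fin N → ℝ,
      (∑' k : Fin N → ℤ,
        if δ * n < ‖y - fun i => (k i : ℝ)‖ then Z (y - fun i => (k i : ℝ)) else 0) ≤ ε) :
    ∀ ε > (0 : ℝ), ∃ n₀ : ℕ, ∀ n ≥ n₀, 0 < n → ∀ x : Fin N → ℝ,
      |(∑' k : Fin N → ℤ,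
          f (fun i => (k i : ℝ) / n) * Z ((n : ℝ) • x - fun i => (k i : ℝ))) - f x| ≤ ε := by
  intro ε hε
  have hB : (0:ℝ) ≤ B := le_trans (abs_nonneg _) (hfb 0)
  obtain ⟨δ, hδ, hδf⟩ := Metric.uniformContinuous_iff.mp hfc (ε/2) (by linarith)
  have hε' : (0:ℝ) < ε / (4*B+2) := by positivity
  obtain ⟨n₀, hn₀⟩ := htail (δ/2) (by linarith) (ε/(4*B+2)) hε'
  refine ⟨n₀, fun n hn hnpos x => ?_⟩
  set y : Fin N → ℝ := (n:ℝ) • x with hy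
  have hZsum : Summable (fun k : Fin N → ℤ => Z (y - fun i => (k i : ℝ))) :=
    (hsum y).summable
  have hZtsum : (∑' k : Fin N → ℤ, Z (y - fun i => (k i : ℝ))) = 1 := (hsum y).tsum_eq
  have hfsum : Summable (fun k : Fin N → ℤ =>
      f (fun i => (k i : ℝ)/n) * Z (y - fun i => (k i : ℝ))) := by
    apply Summable.of_norm_bounded (hZsum.mul_left B)
    intro k
    rw [norm_mul, Real.norm_eq_abs, Real.norm_eq_abs, abs_of_nonneg (hZ _)]
    exact mul_le_mul_of_nonneg_right (hfb _) (hZ _)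
  have key : (∑' k : Fin N → ℤ, f (fun i => (k i : ℝ)/n) * Z (y - fun i => (k i : ℝ))) - f x
      = ∑' k : Fin N → ℤ, (f (fun i => (k i : ℝ)/n) - f x) * Z (y - fun i => (k i : ℝ)) := by
    simp_rw [sub_mul]
    rw [Summable.tsum_sub hfsum (hZsum.mul_left (f x)), tsum_mul_left, hZtsum, mul_one]
  rw [key]
  -- the pointwise bound
  set h : (Fin N → ℤ) → ℝ := fun k =>
    2*B * (if δ/2 * n < ‖y - fun i => (k i : ℝ)‖ then Z (y - fun i => (k i : ℝ)) else 0)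
      + (ε/2) * Z (y - fun i => (k i : ℝ)) with hh
  have hindsum : Summable (fun k : Fin N → ℤ =>
      if δ/2 * n < ‖y - fun i => (k i : ℝ)‖ then Z (y - fun i => (k i : ℝ)) else 0) := by
    apply Summable.of_nonneg_of_le _ _ hZsum
    · intro k; split <;> simp [hZ]
    · intro k; split
      · exact le_rfl
      · exact hZ _
  have hhsum : Summable h := (hindsum.mul_left _).add (hZsum.mul_left _)
  have hbound : ∀ k : Fin N → ℤ,
      |(f (fun i => (k i : ℝ)/n) - f x) * Z (y - fun i => (k i : ℝ))| ≤ h k := by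
    intro k
    rw [abs_mul, abs_of_nonneg (hZ _), hh]
    by_cases hk : δ/2 * n < ‖y - fun i => (k i : ℝ)‖
    · simp only [hk, if_true]
      have h1 : |f (fun i => (k i : ℝ)/n) - f x| ≤ 2*B := by
        calc |f (fun i => (k i : ℝ)/n) - f x| ≤ |f (fun i => (k i : ℝ)/n)| + |f x| :=
              abs_sub _ _
          _ ≤ B + B := add_le_add (hfb _) (hfb _)
          _ = 2*B := by ring
      have := mul_le_mul_of_nonneg_right h1 (hZ (y - fun i => (k i : ℝ)))
      nlinarith [hZ (y - fun i => (k i : ℝ))]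
    · simp only [hk, if_false]
      have hnear : ‖y - fun i => (k i : ℝ)‖ ≤ δ/2 * n := le_of_not_gt hk
      have hyk : (y - fun i => (k i : ℝ)) = (n:ℝ) • (x - fun i => (k i : ℝ)/n) := by
        funext i
        have : (n:ℝ) ≠ 0 := Nat.cast_ne_zero.mpr hnpos.ne'
        simp [hy, Pi.smul_apply, smul_eq_mul]
        field_simp
      have hnorm : ‖y - fun i => (k i : ℝ)‖ = (n:ℝ) * ‖x - fun i => (k i : ℝ)/n‖ := by
        rw [hyk, norm_smul]
        rw [Real.norm_natCast]
      have hnn : (0:ℝ) < n := Nat.cast_pos.mpr hnpos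
      have hxk : ‖x - fun i => (k i : ℝ)/n‖ ≤ δ/2 := by
        rw [hnorm] at hnear
        nlinarith
      have hd : dist (fun i => (k i : ℝ)/n) x < δ := by
        rw [dist_eq_norm, ← norm_neg]
        simp only [neg_sub]
        linarith
      have hf1 : |f (fun i => (k i : ℝ)/n) - f x| ≤ ε/2 := by
        have := hδf hd
        rw [Real.dist_eq] at this
        linarith
      have := mul_le_mul_of_nonneg_right hf1 (hZ (y - fun i => (k i : ℝ)))
      nlinarith [hZ (y - fun i => (k i : ℝ))]
  have hgsum : Summable (fun k : Fin N → ℤ =>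
      ((f fun i => (k i : ℝ)/n) - f x) * Z (y - fun i => (k i : ℝ))) := by
    simpa [sub_mul] using hfsum.sub (hZsum.mul_left (f x))
  calc |∑' k : Fin N → ℤ, (f (fun i => (k i : ℝ)/n) - f x) * Z (y - fun i => (k i : ℝ))|
      ≤ ∑' k : Fin N → ℤ, |(f (fun i => (k i : ℝ)/n) - f x) * Z (y - fun i => (k i : ℝ))| := by
        simpa only [Real.norm_eq_abs] using norm_tsum_le_tsum_norm hgsum.norm
    _ ≤ ∑' k, h k := Summable.tsum_le_tsum hbound hgsum.abs hhsum
    _ = 2*B * (∑' k : Fin N → ℤ,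
          if δ/2 * n < ‖y - fun i => (k i : ℝ)‖ then Z (y - fun i => (k i : ℝ)) else 0)
        + (ε/2) * (∑' k : Fin N → ℤ, Z (y - fun i => (k i : ℝ))) := by
        rw [hh, Summable.tsum_add (hindsum.mul_left _) (hZsum.mul_left _), tsum_mul_left, tsum_mul_left]
    _ ≤ 2*B * (ε/(4*B+2)) + (ε/2) * 1 := by
        have ht := hn₀ n hn y
        have h2 : (0:ℝ) ≤ 2*B := by linarith
        rw [hZtsum]
        exact add_le_add (mul_le_mul_of_nonneg_left ht h2) le_rfl
    _ ≤ ε := by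
        have h4 : (0:ℝ) < 4*B+2 := by linarith
        have hkey : 2*B*(ε/(4*B+2)) ≤ ε/2 := by
          rw [mul_div_assoc', div_le_div_iff₀ h4 two_pos]
          nlinarith
        nlinarith
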